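/- The polynomial q(w) = w⁶ − 2w⁵ + 2w⁴ − 3w³ + 2w² − 2w + 1 is irreducible over ℚ, and the number field K = ℚ[w]/(q(w)) contains a root of the polynomial x³ + x² − 2x − 1 (the minimal polynomial of ζ₇ + ζ₇⁻¹); in particular K contains a subfield isomorphic to the real cubic subfield ℚ(ζ₇ + ζ₇⁻¹) of the 7th cyclotomic field. -/
import Mathlib

open Polynomial

/-- The sextic polynomial `q(w) = w⁶ − 2w⁵ + 2w⁴ − 3w³ + 2w² − 2w + 1` defining the
coefficient field of the surface `S₁`. -/
noncomputable def qpoly : ℚ[X] :=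
  X ^ 6 - 2 * X ^ 5 + 2 * X ^ 4 - 3 * X ^ 3 + 2 * X ^ 2 - 2 * X + 1

/-- Integer version of `qpoly`. -/
noncomputable def qZ : ℤ[X] :=
  X ^ 6 - 2 * X ^ 5 + 2 * X ^ 4 - 3 * X ^ 3 + 2 * X ^ 2 - 2 * X + 1

lemma two_eq_zero' : (2 : (ZMod 2)[X]) = 0 := by
  have h : ((2 : ℕ) : (ZMod 2)[X]) = C ((2 : ℕ) : ZMod 2) := (Polynomial.C_eq_natCast 2).symm
  have h2 : ((2 : ℕ) : ZMod 2) = 0 := rfl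
  rw [h2, C_0] at h
  exact_mod_cast h

lemma not_dvd_of_rem {K : Type*} [Field K] {m p s r : K[X]} (hp : p = m * s + r)
    (hr : r ≠ 0) (hdeg : r.degree < m.degree) : ¬ m ∣ p := by
  rintro ⟨t, ht⟩
  have hmr : m ∣ r := ⟨t - s, by rw [mul_sub, ← ht, hp]; ring⟩
  exact absurd (Polynomial.degree_le_of_dvd hmr hr) (not_le.mpr hdeg)

lemma zmod2_cases : ∀ x : ZMod 2, x = 0 ∨ x = 1 := by decide

lemma monic_expand2 {R : Type*} [CommRing R] {m : R[X]} (hm : m.Monic)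
    (h : m.natDegree = 2) : m = X ^ 2 + C (m.coeff 1) * X + C (m.coeff 0) := by
  have h3 : m.coeff 2 = 1 := by have := hm.coeff_natDegree; rwa [h] at this
  have hs := m.as_sum_range_C_mul_X_pow
  rw [h] at hs
  conv_lhs => rw [hs]
  simp only [Finset.sum_range_succ, Finset.sum_range_zero, h3, C_1, one_mul, zero_add,
    pow_zero, mul_one, pow_one]
  ring

lemma monic_expand3 {R : Type*} [CommRing R] {m : R[X]} (hm : m.Monic)
    (h : m.natDegree = 3) :
    m = X ^ 3 + C (m.coeff 2) * X ^ 2 + C (m.coeff 1) * X + C (m.coeff 0) := by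
  have h3 : m.coeff 3 = 1 := by have := hm.coeff_natDegree; rwa [h] at this
  have hs := m.as_sum_range_C_mul_X_pow
  rw [h] at hs
  conv_lhs => rw [hs]
  simp only [Finset.sum_range_succ, Finset.sum_range_zero, h3, C_1, one_mul, zero_add,
    pow_zero, mul_one, pow_one]
  ring

/-- No irreducible polynomial of degree at most 3 divides `X^6 + X^3 + 1` over `ZMod 2`. -/
lemma no_small_factor (m : (ZMod 2)[X]) (hirr : Irreducible m) (hle : m.natDegree ≤ 3) :
    ¬ m ∣ (X ^ 6 + X ^ 3 + 1 : (ZMod 2)[X]) := by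
  have h2 := two_eq_zero'
  have hm0 : m ≠ 0 := hirr.ne_zero
  have hmon : m.Monic := by
    have hl : m.leadingCoeff ≠ 0 := leadingCoeff_ne_zero.mpr hm0
    rcases zmod2_cases m.leadingCoeff with h | h
    · exact absurd h hl
    · exact h
  have hpos : 1 ≤ m.natDegree := by
    by_contra hc
    push_neg at hc
    have hd0 : m.natDegree = 0 := Nat.lt_one_iff.mp hc
    have hC : m = C (m.coeff 0) := eq_C_of_natDegree_eq_zero hd0
    have hc0 : m.coeff 0 ≠ 0 := fun h => hm0 (by rw [hC, h, C_0])
    exact hirr.not_isUnit (hC ▸ isUnit_C.mpr (isUnit_iff_ne_zero.mpr hc0))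
  interval_cases hd : m.natDegree
  · -- degree 1
    have hm := hmon.eq_X_add_C hd
    rcases zmod2_cases (m.coeff 0) with h | h <;> rw [h] at hm
    · rw [hm]
      refine not_dvd_of_rem (s := X ^ 5 + X ^ 2) (r := 1) ?_ one_ne_zero ?_
      · rw [C_0, add_zero]; ring
      · rw [C_0, add_zero, degree_one, degree_X]; decide
    · rw [hm]
      refine not_dvd_of_rem (s := X ^ 5 + X ^ 4 + X ^ 3) (r := 1) ?_ one_ne_zero ?_
      · rw [C_1]; linear_combination (-(X:(ZMod 2)[X]) ^ 5 - X ^ 4) * h2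
      · rw [degree_one, degree_X_add_C]; decide
  · -- degree 2
    have hm := monic_expand2 hmon hd
    rcases zmod2_cases (m.coeff 0) with h0 | h0 <;> rw [h0] at hm
    · have hfac : m = X * (X + C (m.coeff 1)) := by
        conv_lhs => rw [hm]
        rw [C_0]; ring
      rcases hirr.isUnit_or_isUnit hfac with h | h
      · exact absurd h (not_isUnit_of_degree_pos _ (by rw [degree_X]; decide))
      · exact absurd h (not_isUnit_of_degree_pos _ (by rw [degree_X_add_C]; decide))
    · rcases zmod2_cases (m.coeff 1) with h1 | h1 <;> rw [h1] at hm
      · have hfac : m = (X + C 1) * (X + C 1) := by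
          rw [hm, C_0, C_1]; linear_combination (-(X : (ZMod 2)[X])) * h2
        rcases hirr.isUnit_or_isUnit hfac with h | h <;>
          exact absurd h (not_isUnit_of_degree_pos _ (by rw [degree_X_add_C]; decide))
      · rw [hm, C_1]
        have hmdeg : degree ((X:(ZMod 2)[X]) ^ 2 + 1 * X + 1) = 2 := by compute_degree!
        refine not_dvd_of_rem (s := X ^ 4 + X ^ 3) (r := 1) ?_ one_ne_zero ?_
        · linear_combination (-(X:(ZMod 2)[X]) ^ 5 - X ^ 4) * h2
        · rw [degree_one, show ((X:(ZMod 2)[X]) ^ 2 + 1 * X + 1) = X ^ 2 + 1 * X + 1 by ring,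
            hmdeg]
          decide
  · -- degree 3
    have hm := monic_expand3 hmon hd
    rcases zmod2_cases (m.coeff 0) with h0 | h0 <;> rw [h0] at hm
    · have hfac : m = X * (X ^ 2 + C (m.coeff 2) * X + C (m.coeff 1)) := by
        conv_lhs => rw [hm]
        rw [C_0]; ring
      rcases hirr.isUnit_or_isUnit hfac with h | h
      · exact absurd h (not_isUnit_of_degree_pos _ (by rw [degree_X]; decide))
      · refine absurd h (not_isUnit_of_degree_pos _ ?_)
        have hq : degree ((X:(ZMod 2)[X]) ^ 2 + C (m.coeff 2) * X + C (m.coeff 1)) = 2 := by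
          rw [show ((X:(ZMod 2)[X]) ^ 2 + C (m.coeff 2) * X + C (m.coeff 1))
            = C 1 * X ^ 2 + C (m.coeff 2) * X + C (m.coeff 1) by rw [C_1]; ring]
          exact degree_quadratic one_ne_zero
        rw [hq]; decide
    · rcases zmod2_cases (m.coeff 2) with h2' | h2' <;> rw [h2'] at hm <;>
        rcases zmod2_cases (m.coeff 1) with h1 | h1 <;> rw [h1] at hm
      · -- X^3 + 1 = (X+1)(X^2+X+1)
        have hfac : m = (X + C 1) * (X ^ 2 + X + 1) := by
          rw [hm, C_0, C_1]
          linear_combination (-(X:(ZMod 2)[X]) ^ 2 - X) * h2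
        rcases hirr.isUnit_or_isUnit hfac with h | h
        · exact absurd h (not_isUnit_of_degree_pos _ (by rw [degree_X_add_C]; decide))
        · refine absurd h (not_isUnit_of_degree_pos _ ?_)
          have hq : degree ((X:(ZMod 2)[X]) ^ 2 + X + 1) = 2 := by compute_degree!
          rw [hq]; decide
      · -- X^3 + X + 1 : remainder X^2 + X + 1
        rw [hm, C_0, C_1]
        have hr2 : degree ((X:(ZMod 2)[X]) ^ 2 + X + 1) = 2 := by compute_degree!
        have hm3 : degree ((X:(ZMod 2)[X]) ^ 3 + 0 * X ^ 2 + 1 * X + 1) = 3 := by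
          compute_degree!
        refine not_dvd_of_rem (s := X ^ 3 + X) (r := X ^ 2 + X + 1) ?_ ?_ ?_
        · linear_combination (-(X:(ZMod 2)[X]) ^ 4 - X ^ 2 - X) * h2
        · intro h; rw [h] at hr2; simp at hr2
        · rw [hr2, show ((X:(ZMod 2)[X]) ^ 3 + 0 * X ^ 2 + 1 * X + 1)
            = X ^ 3 + 0 * X ^ 2 + 1 * X + 1 by ring, hm3]
          decide
      · -- X^3 + X^2 + 1 : remainder X
        rw [hm, C_0, C_1]
        have hm3 : degree ((X:(ZMod 2)[X]) ^ 3 + 1 * X ^ 2 + 0 * X + 1) = 3 := by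
          compute_degree!
        refine not_dvd_of_rem (s := X ^ 3 + X ^ 2 + X + 1) (r := X) ?_ X_ne_zero ?_
        · linear_combination (-(X:(ZMod 2)[X]) ^ 5 - X ^ 4 - X ^ 3 - X ^ 2 - X) * h2
        · rw [degree_X, show ((X:(ZMod 2)[X]) ^ 3 + 1 * X ^ 2 + 0 * X + 1)
            = X ^ 3 + 1 * X ^ 2 + 0 * X + 1 by ring, hm3]
          decide
      · -- X^3 + X^2 + X + 1 = (X+1)(X^2+1)
        have hfac : m = (X + C 1) * (X ^ 2 + 1) := by rw [hm, C_1]; ring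
        rcases hirr.isUnit_or_isUnit hfac with h | h
        · exact absurd h (not_isUnit_of_degree_pos _ (by rw [degree_X_add_C]; decide))
        · refine absurd h (not_isUnit_of_degree_pos _ ?_)
          have hq : degree ((X:(ZMod 2)[X]) ^ 2 + 1) = 2 := by compute_degree!
          rw [hq]; decide

lemma p2_natDegree : (X ^ 6 + X ^ 3 + 1 : (ZMod 2)[X]).natDegree = 6 := by compute_degree!

lemma p2_ne_zero : (X ^ 6 + X ^ 3 + 1 : (ZMod 2)[X]) ≠ 0 := by
  intro h
  have := p2_natDegree
  rw [h] at this
  simp at this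

lemma p2_irreducible : Irreducible (X ^ 6 + X ^ 3 + 1 : (ZMod 2)[X]) := by
  constructor
  · intro h
    have := natDegree_eq_zero_of_isUnit h
    rw [p2_natDegree] at this
    exact absurd this (by norm_num)
  · intro a b hab
    by_contra hcon
    push_neg at hcon
    obtain ⟨ha, hb⟩ := hcon
    have ha0 : a ≠ 0 := by rintro rfl; exact p2_ne_zero (by rw [hab, zero_mul])
    have hb0 : b ≠ 0 := by rintro rfl; exact p2_ne_zero (by rw [hab, mul_zero])
    have hsum : a.natDegree + b.natDegree = 6 := by
      rw [← natDegree_mul ha0 hb0, ← hab, p2_natDegree]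
    -- pick a factor of degree ≤ 3
    obtain ⟨c, hcd, hcu, hc0, hcle⟩ :
        ∃ c : (ZMod 2)[X], c ∣ (X ^ 6 + X ^ 3 + 1 : (ZMod 2)[X]) ∧ ¬ IsUnit c ∧ c ≠ 0 ∧
          c.natDegree ≤ 3 := by
      rcases le_or_gt a.natDegree 3 with h | h
      · exact ⟨a, ⟨b, hab⟩, ha, ha0, h⟩
      · exact ⟨b, ⟨a, by rw [hab, mul_comm]⟩, hb, hb0, by omega⟩
    obtain ⟨μ, hμirr, hμdvd⟩ := WfDvdMonoid.exists_irreducible_factor hcu hc0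
    exact no_small_factor μ hμirr ((natDegree_le_of_dvd hμdvd hc0).trans hcle)
      (hμdvd.trans hcd)

lemma qZ_monic : qZ.Monic := by unfold qZ; monicity!

lemma qZ_map_zmod2 : qZ.map (Int.castRingHom (ZMod 2)) = X ^ 6 + X ^ 3 + 1 := by
  have h2 := two_eq_zero'
  unfold qZ
  simp only [Polynomial.map_add, Polynomial.map_sub, Polynomial.map_mul, Polynomial.map_pow,
    Polynomial.map_X, Polynomial.map_ofNat, Polynomial.map_one]
  linear_combination (-(X:(ZMod 2)[X]) ^ 5 + X ^ 4 - 2 * X ^ 3 + X ^ 2 - X) * h2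

lemma qZ_map_rat : qZ.map (Int.castRingHom ℚ) = qpoly := by
  unfold qZ qpoly
  simp only [Polynomial.map_add, Polynomial.map_sub, Polynomial.map_mul, Polynomial.map_pow,
    Polynomial.map_X, Polynomial.map_ofNat, Polynomial.map_one]

lemma qpoly_irreducible : Irreducible qpoly := by
  rw [← qZ_map_rat]
  rw [← IsPrimitive.Int.irreducible_iff_irreducible_map_cast qZ_monic.isPrimitive]
  exact qZ_monic.irreducible_of_irreducible_map (Int.castRingHom (ZMod 2)) _
    (qZ_map_zmod2 ▸ p2_irreducible)

/-- `q` is irreducible over ℚ, and the number field `K = ℚ[w]/(q(w))`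
contains a root of `x³ + x² − 2x − 1`, the minimal polynomial of `ζ₇ + ζ₇⁻¹`; in
particular `K` contains a subfield isomorphic to `ℚ(ζ₇ + ζ₇⁻¹)`. -/
theorem qpoly_irreducible_and_contains_real_cubic :
    Irreducible qpoly ∧
      ∃ α : AdjoinRoot qpoly, α ^ 3 + α ^ 2 - 2 * α - 1 = 0 := by
  refine ⟨qpoly_irreducible, ?_⟩
  set P : ℚ[X] := -X ^ 4 + 2 * X ^ 3 - X ^ 2 + X - 1 with hP
  refine ⟨AdjoinRoot.mk qpoly P, ?_⟩
  have key : P ^ 3 + P ^ 2 - 2 * P - 1 =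
      qpoly * (-X ^ 6 + 4 * X ^ 5 - 5 * X ^ 4 + 2 * X ^ 3 - X ^ 2 + X + 1) := by
    rw [hP]; unfold qpoly; ring
  have h0 : AdjoinRoot.mk qpoly (P ^ 3 + P ^ 2 - 2 * P - 1) = 0 := by
    rw [key, map_mul, AdjoinRoot.mk_self, zero_mul]
  calc (AdjoinRoot.mk qpoly P) ^ 3 + (AdjoinRoot.mk qpoly P) ^ 2 -
        2 * AdjoinRoot.mk qpoly P - 1
      = AdjoinRoot.mk qpoly (P ^ 3 + P ^ 2 - 2 * P - 1) := by
        simp only [map_add, map_sub, map_pow, map_mul, map_ofNat, map_one]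
    _ = 0 := h0
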